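/- Let $A \in \mathbb{R}^{n\times n}$, $B \in \mathbb{R}^{n\times m}$, $C \in \mathbb{R}^{p\times n}$, $\tau > 0$, and let $\hat{V}, \hat{W} \in \mathbb{R}^{n\times r}$ satisfy $\hat{W}^T\hat{V} = I$. Define the reduced model $\hat{A} = \hat{W}^T A \hat{V}$, $\hat{B} = \hat{W}^T B$, $\hat{C} = C\hat{V}$, and set $B_\tau = \exp(\tau A)B$, $\hat{B}_\tau = \exp(\tau\hat{A})\hat{B}$. Let $\bar{P}_\tau \in \mathbb{R}^{n\times r}$ satisfy $A\bar{P}_\tau + \bar{P}_\tau\hat{A}^T + B\hat{B}^T - B_\tau\hat{B}_\tau^T = 0$, and suppose the reduced Lyapunov equation $\hat{A}X + X\hat{A}^T + \hat{B}\hat{B}^T - \hat{B}_\tau\hat{B}_\tau^T = 0$ has $\hat{P}_\tau$ as its unique solution. If $\hat{V} = \bar{P}_\tau$ and $B_\tau = \hat{V}\hat{B}_\tau$, then $\hat{P}_\tau = I$ and $C\bar{P}_\tau - \hat{C}\hat{P}_\tau = 0$. -/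

import Mathlib

open Matrix NormedSpace

/-- **Theorem 2, first half (time-limited case).**
If the reduced model is obtained via the oblique projection with `V̂ = P̄τ` and
`Bτ = V̂ B̂τ`, then the unique solution `P̂τ` of the reduced time-limited Lyapunov
equation equals the identity and the optimality condition `C P̄τ − Ĉ P̂τ = 0` holds. -/
theorem time_limited_projection_satisfies_b3
    {n m p r : ℕ}
    (A : Matrix (Fin n) (Fin n) ℝ)
    (B : Matrix (Fin n) (Fin m) ℝ)
    (C : Matrix (Fin p) (Fin n) ℝ)
    (τ : ℝ) (hτ : 0 < τ)
    (V W : Matrix (Fin n) (Fin r) ℝ)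
    (hWV : Wᵀ * V = 1)
    (Ahat : Matrix (Fin r) (Fin r) ℝ) (hAhat : Ahat = Wᵀ * A * V)
    (Bhat : Matrix (Fin r) (Fin m) ℝ) (hBhat : Bhat = Wᵀ * B)
    (Chat : Matrix (Fin p) (Fin r) ℝ) (hChat : Chat = C * V)
    (Btau : Matrix (Fin n) (Fin m) ℝ) (hBtau : Btau = exp (τ • A) * B)
    (Bhattau : Matrix (Fin r) (Fin m) ℝ) (hBhattau : Bhattau = exp (τ • Ahat) * Bhat)
    (Pbartau : Matrix (Fin n) (Fin r) ℝ)
    (hPbartau : A * Pbartau + Pbartau * Ahatᵀ + B * Bhatᵀ - Btau * Bhattauᵀ = 0)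
    (Phattau : Matrix (Fin r) (Fin r) ℝ)
    (hPhattau : Ahat * Phattau + Phattau * Ahatᵀ + Bhat * Bhatᵀ - Bhattau * Bhattauᵀ = 0)
    (huniq : ∀ X : Matrix (Fin r) (Fin r) ℝ,
      Ahat * X + X * Ahatᵀ + Bhat * Bhatᵀ - Bhattau * Bhattauᵀ = 0 → X = Phattau)
    (hV : V = Pbartau)
    (hBtauV : Btau = V * Bhattau) :
    Phattau = 1 ∧ C * Pbartau - Chat * Phattau = 0 := by
  have key : Ahat * 1 + 1 * Ahatᵀ + Bhat * Bhatᵀ - Bhattau * Bhattauᵀ = 0 := by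
    have h := congrArg (fun M => Wᵀ * M) hPbartau
    simp only [Matrix.mul_add, Matrix.mul_sub, Matrix.mul_zero] at h
    rw [← hV, hBtauV] at h
    have e1 : Wᵀ * (A * V) = Ahat * 1 := by rw [hAhat, Matrix.mul_one, Matrix.mul_assoc]
    have e2 : Wᵀ * (V * Ahatᵀ) = 1 * Ahatᵀ := by rw [← Matrix.mul_assoc, hWV]
    have e3 : Wᵀ * (B * Bhatᵀ) = Bhat * Bhatᵀ := by rw [← Matrix.mul_assoc, hBhat]
    have e4 : Wᵀ * (V * Bhattau * Bhattauᵀ) = Bhattau * Bhattauᵀ := by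
      rw [← Matrix.mul_assoc, ← Matrix.mul_assoc, hWV, Matrix.one_mul]
    rw [e1, e2, e3, e4] at h
    exact h
  have h1 : (1 : Matrix (Fin r) (Fin r) ℝ) = Phattau := huniq 1 key
  refine ⟨h1.symm, ?_⟩
  rw [← h1, Matrix.mul_one, hChat, hV, sub_self]
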